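/- arXiv:2101.07083 — 2 statements merged into one kernel-verified Lean document; each statement's English description precedes it below -/
import Mathlib

section
/- Let g be a Riemannian metric on a surface Σ and let A be a smooth (1,1)-tensor with d^{∇^g}A = 0 such that det A vanishes nowhere. Define h = g(A·,A·). Then the Levi-Civita connections of g and h are related by ∇^h_v w = A^{-1}(∇^g_v(A(w))), and the Gaussian curvatures are related by K_h = K_g / det A. -/
noncomputable section

open Matrix

/-! ### Coordinate differential geometry on the plane `ℂ ≅ ℝ²`

We develop, in a fixed coordinate chart (an open subset of `ℂ`), the classical
coordinate expressions for Riemannian metrics (as matrix-valued fields),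
Christoffel symbols, covariant derivatives of `(1,1)`-tensors, the Codazzi
condition `d^∇A = 0`, the Riemann curvature tensor, the Gaussian curvature and
the Laplace–Beltrami operator. -/

/-- The two real coordinate directions of `ℂ` viewed as the plane `ℝ²`. -/
def dir : Fin 2 → ℂ := ![1, Complex.I]

/-- The two real coordinate functions of `ℂ`. -/
def coordC : Fin 2 → ℂ → ℝ := ![Complex.re, Complex.im]

/-- Partial derivative of a real-valued function in the `i`-th coordinate direction. -/
def pd (i : Fin 2) (f : ℂ → ℝ) (z : ℂ) : ℝ := fderiv ℝ f z (dir i)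

/-- Smoothness of a matrix-valued field on a set. -/
def SmoothMatOn (A : ℂ → Matrix (Fin 2) (Fin 2) ℝ) (U : Set ℂ) : Prop :=
  ∀ i j, ContDiffOn ℝ (⊤ : ℕ∞) (fun z => A z i j) U

/-- `g` is (the coordinate expression of) a smooth Riemannian metric on `U ⊆ ℂ`. -/
structure IsMetricOn (g : ℂ → Matrix (Fin 2) (Fin 2) ℝ) (U : Set ℂ) : Prop where
  smooth : SmoothMatOn g U
  symm : ∀ z ∈ U, (g z).IsSymm
  posdef : ∀ z ∈ U, (g z).PosDef

/-- Christoffel symbols `Γ^k_{ij}` of a metric, in coordinates. -/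
def christoffel (g : ℂ → Matrix (Fin 2) (Fin 2) ℝ) (k i j : Fin 2) (z : ℂ) : ℝ :=
  (1/2) * ∑ l, (g z)⁻¹ k l *
    (pd i (fun w => g w j l) z + pd j (fun w => g w i l) z - pd l (fun w => g w i j) z)

/-- Components `(∇_i A)^k_j` of the covariant derivative of a `(1,1)`-tensor field `A`
with respect to the Levi-Civita connection of `g`. -/
def covDeriv11 (g A : ℂ → Matrix (Fin 2) (Fin 2) ℝ) (i k j : Fin 2) (z : ℂ) : ℝ :=
  pd i (fun w => A w k j) z + ∑ l, christoffel g k i l z * A z l j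
    - ∑ l, christoffel g l i j z * A z k l

/-- The Codazzi condition `d^{∇^g}A = 0` on `U`:
`∇_i (A(∂_j)) - ∇_j (A(∂_i)) = 0` for all coordinate directions. -/
def IsCodazziOn (g A : ℂ → Matrix (Fin 2) (Fin 2) ℝ) (U : Set ℂ) : Prop :=
  ∀ z ∈ U, ∀ i j k, covDeriv11 g A i k j z = covDeriv11 g A j k i z

/-- Components `R^l_{ijk}` of the Riemann curvature tensor,
`R(∂_i,∂_j)∂_k = R^l_{ijk} ∂_l`. -/
def riem (g : ℂ → Matrix (Fin 2) (Fin 2) ℝ) (l i j k : Fin 2) (z : ℂ) : ℝ :=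
  pd i (christoffel g l j k) z - pd j (christoffel g l i k) z
    + ∑ m, (christoffel g l i m z * christoffel g m j k z
      - christoffel g l j m z * christoffel g m i k z)

/-- The Gaussian curvature `K_g = ⟨R(∂₀,∂₁)∂₁, ∂₀⟩ / det g` of a metric on a surface. -/
def gaussK (g : ℂ → Matrix (Fin 2) (Fin 2) ℝ) (z : ℂ) : ℝ :=
  (∑ l, g z l 0 * riem g l 0 1 1 z) / (g z).det

/-- The Laplace–Beltrami operator of `g` (with negative spectrum convention):
`Δ^g f = (det g)^{-1/2} ∂_i ( (det g)^{1/2} g^{ij} ∂_j f )`. -/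
def laplace (g : ℂ → Matrix (Fin 2) (Fin 2) ℝ) (f : ℂ → ℝ) (z : ℂ) : ℝ :=
  (Real.sqrt (g z).det)⁻¹ *
    ∑ i, pd i (fun w => Real.sqrt (g w).det * ∑ j, (g w)⁻¹ i j * pd j f w) z

/-- The Jacobian matrix of a map `ψ : ℂ → ℂ` (as a map of the plane) at `z`. -/
def jacobianMat (ψ : ℂ → ℂ) (z : ℂ) : Matrix (Fin 2) (Fin 2) ℝ :=
  Matrix.of fun a b => coordC a (fderiv ℝ ψ z (dir b))

/-- Coordinate expression of the pullback metric `ψ*g`. -/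
def pullbackMetric (ψ : ℂ → ℂ) (g : ℂ → Matrix (Fin 2) (Fin 2) ℝ) (z : ℂ) :
    Matrix (Fin 2) (Fin 2) ℝ :=
  (jacobianMat ψ z)ᵀ * g (ψ z) * jacobianMat ψ z

end
noncomputable section

open Matrix

/-- Components `(∇_X Y)^k` of the covariant derivative of a vector field `Y`
along a vector field `X`, for the Levi-Civita connection of `g`. -/
def covVec (g : ℂ → Matrix (Fin 2) (Fin 2) ℝ) (X Y : ℂ → Fin 2 → ℝ) (k : Fin 2) (z : ℂ) : ℝ :=
  ∑ i, X z i * (pd i (fun w => Y w k) z + ∑ j, christoffel g k i j z * Y z j)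

section Toolbox
open Filter Topology Matrix

theorem pd_congr {f f' : ℂ → ℝ} {z : ℂ} (h : f =ᶠ[nhds z] f') (i : Fin 2) :
    pd i f z = pd i f' z := by
  unfold pd; rw [Filter.EventuallyEq.fderiv_eq h]

theorem pd_congr_on {U : Set ℂ} (hU : IsOpen U) {f f' : ℂ → ℝ} {z : ℂ} (hz : z ∈ U)
    (h : ∀ w ∈ U, f w = f' w) (i : Fin 2) : pd i f z = pd i f' z :=
  pd_congr (Filter.eventuallyEq_of_mem (hU.mem_nhds hz) h) i

theorem pd_const (i : Fin 2) (c : ℝ) (z : ℂ) : pd i (fun _ => c) z = 0 := by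
  simp [pd]

theorem pd_add {f g : ℂ → ℝ} {z : ℂ} (hf : DifferentiableAt ℝ f z)
    (hg : DifferentiableAt ℝ g z) (i : Fin 2) :
    pd i (fun w => f w + g w) z = pd i f z + pd i g z := by
  simp [pd, fderiv_fun_add hf hg]

theorem pd_sub {f g : ℂ → ℝ} {z : ℂ} (hf : DifferentiableAt ℝ f z)
    (hg : DifferentiableAt ℝ g z) (i : Fin 2) :
    pd i (fun w => f w - g w) z = pd i f z - pd i g z := by
  simp [pd, fderiv_fun_sub hf hg]

theorem pd_mul {f g : ℂ → ℝ} {z : ℂ} (hf : DifferentiableAt ℝ f z)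
    (hg : DifferentiableAt ℝ g z) (i : Fin 2) :
    pd i (fun w => f w * g w) z = f z * pd i g z + g z * pd i f z := by
  simp [pd, fderiv_fun_mul hf hg]

theorem pd_cmul {f : ℂ → ℝ} {z : ℂ} (hf : DifferentiableAt ℝ f z) (c : ℝ) (i : Fin 2) :
    pd i (fun w => c * f w) z = c * pd i f z := by
  simp [pd, fderiv_const_mul hf]

theorem pd_inv {f : ℂ → ℝ} {z : ℂ} (hf : DifferentiableAt ℝ f z) (hfz : f z ≠ 0)
    (hloc : ∀ᶠ w in nhds z, f w ≠ 0) (i : Fin 2) :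
    pd i (fun w => (f w)⁻¹) z = -((f z)⁻¹ * ((f z)⁻¹ * pd i f z)) := by
  have hinv : DifferentiableAt ℝ (fun w => (f w)⁻¹) z := hf.inv hfz
  have h1 : pd i (fun w => f w * (f w)⁻¹) z = 0 := by
    rw [pd_congr (f' := fun _ => (1:ℝ)) ?_ i, pd_const]
    exact hloc.mono fun w hw => by field_simp
  rw [pd_mul hf hinv i] at h1
  have hf2 : f z * pd i (fun w => (f w)⁻¹) z = -((f z)⁻¹ * pd i f z) := by linarith
  calc pd i (fun w => (f w)⁻¹) z = (f z)⁻¹ * (f z * pd i (fun w => (f w)⁻¹) z) := by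
        field_simp
    _ = -((f z)⁻¹ * ((f z)⁻¹ * pd i f z)) := by rw [hf2]; ring

/-- Infinitely differentiable (in the `ℕ`-graded sense) at a point. -/
def SmAt (f : ℂ → ℝ) (z : ℂ) : Prop := ∀ n : ℕ, ContDiffAt ℝ n f z

theorem SmAt.diffAt {f : ℂ → ℝ} {z : ℂ} (hf : SmAt f z) : DifferentiableAt ℝ f z :=
  (hf 1).differentiableAt (by simp)

theorem smAt_of_contDiffOn {U : Set ℂ} (hU : IsOpen U) {f : ℂ → ℝ}
    (hf : ContDiffOn ℝ (⊤ : ℕ∞) f U) {z : ℂ} (hz : z ∈ U) : SmAt f z := by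
  intro n
  exact (hf.contDiffAt (hU.mem_nhds hz)).of_le (by exact_mod_cast le_top)

theorem SmAt.congr_on {U : Set ℂ} (hU : IsOpen U) {f f' : ℂ → ℝ} {z : ℂ} (hz : z ∈ U)
    (h : ∀ w ∈ U, f w = f' w) (hf' : SmAt f' z) : SmAt f z := fun n =>
  (hf' n).congr_of_eventuallyEq (Filter.eventuallyEq_of_mem (hU.mem_nhds hz) h)

theorem SmAt.add {f g : ℂ → ℝ} {z : ℂ} (hf : SmAt f z) (hg : SmAt g z) :
    SmAt (fun w => f w + g w) z := fun n => (hf n).add (hg n)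

theorem SmAt.sub {f g : ℂ → ℝ} {z : ℂ} (hf : SmAt f z) (hg : SmAt g z) :
    SmAt (fun w => f w - g w) z := fun n => (hf n).sub (hg n)

theorem SmAt.mul {f g : ℂ → ℝ} {z : ℂ} (hf : SmAt f z) (hg : SmAt g z) :
    SmAt (fun w => f w * g w) z := fun n => (hf n).mul (hg n)

theorem SmAt.neg {f : ℂ → ℝ} {z : ℂ} (hf : SmAt f z) :
    SmAt (fun w => -f w) z := fun n => (hf n).neg

theorem SmAt.const (c : ℝ) (z : ℂ) : SmAt (fun _ => c) z := fun _ => contDiffAt_const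

theorem SmAt.cmul {f : ℂ → ℝ} {z : ℂ} (hf : SmAt f z) (c : ℝ) :
    SmAt (fun w => c * f w) z := (SmAt.const c z).mul hf

theorem SmAt.inv {f : ℂ → ℝ} {z : ℂ} (hf : SmAt f z) (hfz : f z ≠ 0) :
    SmAt (fun w => (f w)⁻¹) z := fun n => (hf n).inv hfz

theorem SmAt.pd {f : ℂ → ℝ} {z : ℂ} (hf : SmAt f z) (i : Fin 2) :
    SmAt (fun w => pd i f w) z := by
  intro n
  have h1 : ContDiffAt ℝ n (fderiv ℝ f) z :=
    (hf (n + 1)).fderiv_right (by exact_mod_cast le_refl _)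
  exact h1.clm_apply contDiffAt_const

theorem pd_comm {f : ℂ → ℝ} {z : ℂ} (hf : SmAt f z) (i j : Fin 2) :
    pd i (fun w => pd j f w) z = pd j (fun w => pd i f w) z := by
  have hd : DifferentiableAt ℝ (fderiv ℝ f) z := by
    have := (hf 2).fderiv_right (m := 1) (by exact_mod_cast (by norm_num : (2:ℕ∞) ≤ 2))
    exact this.differentiableAt (by simp)
  have hsymm : IsSymmSndFDerivAt ℝ f z :=
    (hf 2).isSymmSndFDerivAt (by simp)
  have key : ∀ a b : Fin 2,
      pd a (fun w => pd b f w) z = fderiv ℝ (fderiv ℝ f) z (dir a) (dir b) := by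
    intro a b
    unfold pd
    rw [fderiv_clm_apply hd (differentiableAt_const _)]
    simp
  rw [key i j, key j i, hsymm (dir i) (dir j)]

end Toolbox
section MatrixHelpers
open Matrix

theorem inv00 (M : Matrix (Fin 2) (Fin 2) ℝ) : M⁻¹ 0 0 = M 1 1 * (M.det)⁻¹ := by
  rw [Matrix.inv_def, Matrix.adjugate_fin_two]
  simp [Ring.inverse_eq_inv', Matrix.smul_apply, mul_comm]

theorem inv01 (M : Matrix (Fin 2) (Fin 2) ℝ) : M⁻¹ 0 1 = -M 0 1 * (M.det)⁻¹ := by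
  rw [Matrix.inv_def, Matrix.adjugate_fin_two]
  simp [Ring.inverse_eq_inv', Matrix.smul_apply, mul_comm]

theorem inv10 (M : Matrix (Fin 2) (Fin 2) ℝ) : M⁻¹ 1 0 = -M 1 0 * (M.det)⁻¹ := by
  rw [Matrix.inv_def, Matrix.adjugate_fin_two]
  simp [Ring.inverse_eq_inv', Matrix.smul_apply, mul_comm]

theorem inv11 (M : Matrix (Fin 2) (Fin 2) ℝ) : M⁻¹ 1 1 = M 0 0 * (M.det)⁻¹ := by
  rw [Matrix.inv_def, Matrix.adjugate_fin_two]
  simp [Ring.inverse_eq_inv', Matrix.smul_apply, mul_comm]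

theorem smAt_entry {A : ℂ → Matrix (Fin 2) (Fin 2) ℝ} {U : Set ℂ} (hU : IsOpen U)
    (hA : SmoothMatOn A U) {z : ℂ} (hz : z ∈ U) (a b : Fin 2) :
    SmAt (fun w => A w a b) z := smAt_of_contDiffOn hU (hA a b) hz

theorem smAt_det {A : ℂ → Matrix (Fin 2) (Fin 2) ℝ} {U : Set ℂ} (hU : IsOpen U)
    (hA : SmoothMatOn A U) {z : ℂ} (hz : z ∈ U) :
    SmAt (fun w => (A w).det) z := by
  have e : (fun w => (A w).det)
      = fun w => A w 0 0 * A w 1 1 - A w 0 1 * A w 1 0 := by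
    funext w; exact Matrix.det_fin_two _
  rw [e]
  exact ((smAt_entry hU hA hz 0 0).mul (smAt_entry hU hA hz 1 1)).sub
    ((smAt_entry hU hA hz 0 1).mul (smAt_entry hU hA hz 1 0))

theorem smAt_inv_entry {A : ℂ → Matrix (Fin 2) (Fin 2) ℝ} {U : Set ℂ} (hU : IsOpen U)
    (hA : SmoothMatOn A U) (hdet : ∀ w ∈ U, (A w).det ≠ 0) {z : ℂ} (hz : z ∈ U)
    (k l : Fin 2) : SmAt (fun w => (A w)⁻¹ k l) z := by
  have hdi : SmAt (fun w => ((A w).det)⁻¹) z := (smAt_det hU hA hz).inv (hdet z hz)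
  have he := smAt_entry hU hA hz
  fin_cases k <;> fin_cases l
  · exact SmAt.congr_on hU hz (f' := fun w => A w 1 1 * ((A w).det)⁻¹)
      (fun w _ => inv00 _) ((he 1 1).mul hdi)
  · exact SmAt.congr_on hU hz (f' := fun w => -A w 0 1 * ((A w).det)⁻¹)
      (fun w _ => inv01 _) (((he 0 1).neg).mul hdi)
  · exact SmAt.congr_on hU hz (f' := fun w => -A w 1 0 * ((A w).det)⁻¹)
      (fun w _ => inv10 _) (((he 1 0).neg).mul hdi)
  · exact SmAt.congr_on hU hz (f' := fun w => A w 0 0 * ((A w).det)⁻¹)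
      (fun w _ => inv11 _) ((he 0 0).mul hdi)

theorem gdet_ne {g : ℂ → Matrix (Fin 2) (Fin 2) ℝ} {U : Set ℂ} (hg : IsMetricOn g U)
    {w : ℂ} (hw : w ∈ U) : (g w).det ≠ 0 := (hg.posdef w hw).det_pos.ne'

theorem smAt_christoffel {g : ℂ → Matrix (Fin 2) (Fin 2) ℝ} {U : Set ℂ} (hU : IsOpen U)
    (hg : IsMetricOn g U) {z : ℂ} (hz : z ∈ U) (k i j : Fin 2) :
    SmAt (christoffel g k i j) z := by
  have he := smAt_entry hU hg.smooth hz
  have hi := smAt_inv_entry hU hg.smooth (fun w hw => gdet_ne hg hw) hz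
  have e : christoffel g k i j = fun w => (1/2) *
      ((g w)⁻¹ k 0 * (pd i (fun v => g v j 0) w + pd j (fun v => g v i 0) w
          - pd 0 (fun v => g v i j) w)
        + (g w)⁻¹ k 1 * (pd i (fun v => g v j 1) w + pd j (fun v => g v i 1) w
          - pd 1 (fun v => g v i j) w)) := by
    funext w; simp [christoffel, Fin.sum_univ_two]
  rw [e]
  exact SmAt.cmul (((hi k 0).mul ((((he j 0).pd i).add ((he i 0).pd j)).sub
      ((he i j).pd 0))).add ((hi k 1).mul ((((he j 1).pd i).add ((he i 1).pd j)).sub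
      ((he i j).pd 1)))) (1/2)

end MatrixHelpers
section Core
open Matrix

variable {U : Set ℂ} {g A : ℂ → Matrix (Fin 2) (Fin 2) ℝ}

theorem christoffel_symm (hU : IsOpen U) (hg : IsMetricOn g U) {z : ℂ} (hz : z ∈ U)
    (k i j : Fin 2) : christoffel g k i j z = christoffel g k j i z := by
  have hsym : ∀ l : Fin 2, pd l (fun w => g w i j) z = pd l (fun w => g w j i) z := fun l =>
    pd_congr_on hU hz (fun w hw => (hg.symm w hw).apply j i) l
  simp only [christoffel, Fin.sum_univ_two]
  rw [hsym 0, hsym 1]; ring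

set_option maxHeartbeats 2000000 in
theorem compat (hU : IsOpen U) (hg : IsMetricOn g U) {z : ℂ} (hz : z ∈ U) :
    ∀ i a b : Fin 2, pd i (fun w => g w a b) z
      = (christoffel g 0 i a z * g z 0 b + christoffel g 1 i a z * g z 1 b)
        + (christoffel g 0 i b z * g z a 0 + christoffel g 1 i b z * g z a 1) := by
  have hdg : (g z).det ≠ 0 := gdet_ne hg hz
  have hdg' : g z 0 0 * g z 1 1 - g z 0 1 * g z 0 1 ≠ 0 := by
    have := hdg
    rw [Matrix.det_fin_two, (hg.symm z hz).apply 0 1] at this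
    exact this
  have hsymz : g z 1 0 = g z 0 1 := (hg.symm z hz).apply 0 1
  have hpdsym : ∀ l : Fin 2, pd l (fun w => g w 1 0) z = pd l (fun w => g w 0 1) z := fun l =>
    pd_congr_on hU hz (fun w hw => (hg.symm w hw).apply 0 1) l
  simp only [Fin.forall_fin_two]
  repeat' apply And.intro
  all_goals
    simp only [christoffel, Fin.sum_univ_two, inv00, inv01, inv10, inv11,
      Matrix.det_fin_two, hpdsym, hsymz]
  all_goals (generalize hD : g z 0 0 * g z 1 1 - g z 0 1 * g z 0 1 = D at *; field_simp; subst hD)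
  all_goals ring

/-- `D^m_{ij} = ∂_i A^m_j + Γ^m_{il} A^l_j`, the covariant derivative of the column `A(∂_j)`. -/
def Dd (g A : ℂ → Matrix (Fin 2) (Fin 2) ℝ) (i m j : Fin 2) (z : ℂ) : ℝ :=
  pd i (fun w => A w m j) z + ∑ l, christoffel g m i l z * A z l j

/-- The connection coefficients of the connection `A⁻¹ ∇^g (A ·)`. -/
def Gt (g A : ℂ → Matrix (Fin 2) (Fin 2) ℝ) (k i j : Fin 2) (z : ℂ) : ℝ :=
  ∑ m, (A z)⁻¹ k m * Dd g A i m j z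

theorem Dd_symm (hU : IsOpen U) (hg : IsMetricOn g U) (hcodazzi : IsCodazziOn g A U)
    {z : ℂ} (hz : z ∈ U) (i j : Fin 2) : ∀ m, Dd g A i m j z = Dd g A j m i z := by
  intro m
  have hc := hcodazzi z hz i j m
  simp only [covDeriv11, Fin.sum_univ_two] at hc
  rw [christoffel_symm hU hg hz 0 i j, christoffel_symm hU hg hz 1 i j] at hc
  simp only [Dd, Fin.sum_univ_two]
  linarith

theorem Gt_symm (hU : IsOpen U) (hg : IsMetricOn g U) (hcodazzi : IsCodazziOn g A U)
    {z : ℂ} (hz : z ∈ U) (k i j : Fin 2) : Gt g A k i j z = Gt g A k j i z := by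
  simp only [Gt, Dd_symm hU hg hcodazzi hz i j]

end Core
section HMetric
open Matrix

variable {U : Set ℂ} {g A : ℂ → Matrix (Fin 2) (Fin 2) ℝ}

theorem hEntry (A g : ℂ → Matrix (Fin 2) (Fin 2) ℝ) (j k : Fin 2) :
    (fun w => ((A w)ᵀ * g w * A w) j k)
      = fun w => A w 0 j * (g w 0 0 * A w 0 k) + A w 0 j * (g w 0 1 * A w 1 k)
        + (A w 1 j * (g w 1 0 * A w 0 k) + A w 1 j * (g w 1 1 * A w 1 k)) := by
  funext w
  simp [Matrix.mul_apply, Fin.sum_univ_two, Matrix.transpose_apply]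
  ring

theorem pd_mul3 {f g h : ℂ → ℝ} {z : ℂ} (hf : DifferentiableAt ℝ f z)
    (hg : DifferentiableAt ℝ g z) (hh : DifferentiableAt ℝ h z) (i : Fin 2) :
    pd i (fun w => f w * (g w * h w)) z
      = pd i f z * (g z * h z) + f z * (pd i g z * h z + g z * pd i h z) := by
  rw [pd_mul hf (hg.fun_mul hh) i, pd_mul hg hh i]; ring

set_option maxHeartbeats 2000000 in
theorem hcompat (hU : IsOpen U) (hg : IsMetricOn g U) (hA : SmoothMatOn A U)
    (hdet : ∀ w ∈ U, (A w).det ≠ 0) {z : ℂ} (hz : z ∈ U) (i j k : Fin 2) :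
    pd i (fun w => ((A w)ᵀ * g w * A w) j k) z
      = (Gt g A 0 i j z * ((A z)ᵀ * g z * A z) 0 k
          + Gt g A 1 i j z * ((A z)ᵀ * g z * A z) 1 k)
        + (Gt g A 0 i k z * ((A z)ᵀ * g z * A z) j 0
          + Gt g A 1 i k z * ((A z)ᵀ * g z * A z) j 1) := by
  have dA : ∀ a b : Fin 2, DifferentiableAt ℝ (fun w => A w a b) z :=
    fun a b => (smAt_entry hU hA hz a b).diffAt
  have dg : ∀ a b : Fin 2, DifferentiableAt ℝ (fun w => g w a b) z :=
    fun a b => (smAt_entry hU hg.smooth hz a b).diffAt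
  have hdetA' : A z 0 0 * A z 1 1 - A z 0 1 * A z 1 0 ≠ 0 := by
    rw [← Matrix.det_fin_two]; exact hdet z hz
  have d1 : DifferentiableAt ℝ (fun w => A w 0 j * (g w 0 0 * A w 0 k)) z :=
    (dA 0 j).mul ((dg 0 0).mul (dA 0 k))
  have d2 : DifferentiableAt ℝ (fun w => A w 0 j * (g w 0 1 * A w 1 k)) z :=
    (dA 0 j).mul ((dg 0 1).mul (dA 1 k))
  have d3 : DifferentiableAt ℝ (fun w => A w 1 j * (g w 1 0 * A w 0 k)) z :=
    (dA 1 j).mul ((dg 1 0).mul (dA 0 k))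
  have d4 : DifferentiableAt ℝ (fun w => A w 1 j * (g w 1 1 * A w 1 k)) z :=
    (dA 1 j).mul ((dg 1 1).mul (dA 1 k))
  rw [hEntry A g j k]
  rw [pd_add (d1.fun_add d2) (d3.fun_add d4) i, pd_add d1 d2 i, pd_add d3 d4 i,
    pd_mul3 (dA 0 j) (dg 0 0) (dA 0 k) i, pd_mul3 (dA 0 j) (dg 0 1) (dA 1 k) i,
    pd_mul3 (dA 1 j) (dg 1 0) (dA 0 k) i, pd_mul3 (dA 1 j) (dg 1 1) (dA 1 k) i]
  rw [compat hU hg hz i 0 0, compat hU hg hz i 0 1, compat hU hg hz i 1 0,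
    compat hU hg hz i 1 1]
  simp only [Gt, Dd, Fin.sum_univ_two, inv00, inv01, inv10, inv11, Matrix.det_fin_two,
    Matrix.mul_apply, Matrix.transpose_apply]
  generalize hD : A z 0 0 * A z 1 1 - A z 0 1 * A z 1 0 = D at *; field_simp; subst hD
  ring

end HMetric
section ChristoffelH
open Matrix

variable {U : Set ℂ} {g A : ℂ → Matrix (Fin 2) (Fin 2) ℝ}

set_option maxHeartbeats 4000000 in
theorem christoffel_h (hU : IsOpen U) (hg : IsMetricOn g U) (hA : SmoothMatOn A U)
    (hcodazzi : IsCodazziOn g A U) (hdet : ∀ w ∈ U, (A w).det ≠ 0) {z : ℂ} (hz : z ∈ U)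
    (i j : Fin 2) : ∀ k,
    christoffel (fun w => (A w)ᵀ * g w * A w) k i j z = Gt g A k i j z := by
  have hsymz : g z 1 0 = g z 0 1 := (hg.symm z hz).apply 0 1
  have hDne : ((A z)ᵀ * g z * A z).det ≠ 0 := by
    rw [Matrix.det_mul, Matrix.det_mul, Matrix.det_transpose]
    exact mul_ne_zero (mul_ne_zero (hdet z hz) (gdet_ne hg hz)) (hdet z hz)
  have hDne' := hDne
  simp only [Matrix.det_fin_two, Matrix.mul_apply, Matrix.transpose_apply,
    Fin.sum_univ_two, hsymz] at hDne'
  rw [Fin.forall_fin_two]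
  refine ⟨?_, ?_⟩ <;>
  · simp only [christoffel, Fin.sum_univ_two]
    rw [hcompat hU hg hA hdet hz i j 0, hcompat hU hg hA hdet hz i j 1,
      hcompat hU hg hA hdet hz j i 0, hcompat hU hg hA hdet hz j i 1,
      hcompat hU hg hA hdet hz 0 i j, hcompat hU hg hA hdet hz 1 i j]
    simp only [Gt_symm hU hg hcodazzi hz 0 j i, Gt_symm hU hg hcodazzi hz 1 j i,
      Gt_symm hU hg hcodazzi hz 0 0 i, Gt_symm hU hg hcodazzi hz 1 0 i,
      Gt_symm hU hg hcodazzi hz 0 0 j, Gt_symm hU hg hcodazzi hz 1 0 j,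
      Gt_symm hU hg hcodazzi hz 0 1 i, Gt_symm hU hg hcodazzi hz 1 1 i,
      Gt_symm hU hg hcodazzi hz 0 1 j, Gt_symm hU hg hcodazzi hz 1 1 j]
    simp only [inv00, inv01, inv10, inv11, Matrix.det_fin_two, Matrix.mul_apply,
      Matrix.transpose_apply, Fin.sum_univ_two, hsymz]
    generalize hD : ((A z 0 0 * g z 0 0 + A z 1 0 * g z 0 1) * A z 0 0 + (A z 0 0 * g z 0 1 + A z 1 0 * g z 1 1) * A z 1 0) * ((A z 0 1 * g z 0 0 + A z 1 1 * g z 0 1) * A z 0 1 + (A z 0 1 * g z 0 1 + A z 1 1 * g z 1 1) * A z 1 1) - ((A z 0 0 * g z 0 0 + A z 1 0 * g z 0 1) * A z 0 1 + (A z 0 0 * g z 0 1 + A z 1 0 * g z 1 1) * A z 1 1) * ((A z 0 1 * g z 0 0 + A z 1 1 * g z 0 1) * A z 0 0 + (A z 0 1 * g z 0 1 + A z 1 1 * g z 1 1) * A z 1 0) = D at *; field_simp; subst hD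
    ring

end ChristoffelH
section Part1
open Matrix

variable {U : Set ℂ} {g A : ℂ → Matrix (Fin 2) (Fin 2) ℝ}

set_option maxHeartbeats 2000000 in
theorem covVec_h (hU : IsOpen U) (hg : IsMetricOn g U) (hA : SmoothMatOn A U)
    (hcodazzi : IsCodazziOn g A U) (hdet : ∀ w ∈ U, (A w).det ≠ 0) {z : ℂ} (hz : z ∈ U)
    (X Y : ℂ → Fin 2 → ℝ) (hY : ∀ k, DifferentiableAt ℝ (fun w => Y w k) z) :
    (fun k => covVec (fun w => (A w)ᵀ * g w * A w) X Y k z) =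
      (A z)⁻¹.mulVec (fun k => covVec g X (fun w => (A w).mulVec (Y w)) k z) := by
  have dA : ∀ a b : Fin 2, DifferentiableAt ℝ (fun w => A w a b) z :=
    fun a b => (smAt_entry hU hA hz a b).diffAt
  have hdetA' : A z 0 0 * A z 1 1 - A z 0 1 * A z 1 0 ≠ 0 := by
    rw [← Matrix.det_fin_two]; exact hdet z hz
  have e : ∀ i' k' : Fin 2, pd i' (fun w => A w k' 0 * Y w 0 + A w k' 1 * Y w 1) z
      = A z k' 0 * pd i' (fun w => Y w 0) z + Y z 0 * pd i' (fun w => A w k' 0) z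
        + (A z k' 1 * pd i' (fun w => Y w 1) z + Y z 1 * pd i' (fun w => A w k' 1) z) :=
    fun i' k' => by
      rw [pd_add ((dA k' 0).fun_mul (hY 0)) ((dA k' 1).fun_mul (hY 1)) i',
        pd_mul (dA k' 0) (hY 0) i', pd_mul (dA k' 1) (hY 1) i']
  funext k
  revert k
  rw [Fin.forall_fin_two]
  refine ⟨?_, ?_⟩ <;>
  · simp only [covVec, Matrix.mulVec, dotProduct, Fin.sum_univ_two]
    simp only [christoffel_h hU hg hA hcodazzi hdet hz 0 0,
      christoffel_h hU hg hA hcodazzi hdet hz 0 1,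
      christoffel_h hU hg hA hcodazzi hdet hz 1 0,
      christoffel_h hU hg hA hcodazzi hdet hz 1 1]
    simp only [e]
    simp only [Gt, Dd, Fin.sum_univ_two, inv00, inv01, inv10, inv11, Matrix.det_fin_two]
    generalize hD : A z 0 0 * A z 1 1 - A z 0 1 * A z 1 0 = D at *; field_simp; subst hD
    ring

end Part1
section CurvPrep
open Matrix

variable {U : Set ℂ} {g A : ℂ → Matrix (Fin 2) (Fin 2) ℝ}

theorem pd_neg {f : ℂ → ℝ} {z : ℂ} (i : Fin 2) :
    pd i (fun w => -f w) z = -pd i f z := by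
  simp [pd, fderiv_neg]

theorem pd_det (hU : IsOpen U) (hA : SmoothMatOn A U) {z : ℂ} (hz : z ∈ U) (i : Fin 2) :
    pd i (fun w => (A w).det) z
      = pd i (fun w => A w 0 0) z * A z 1 1 + A z 0 0 * pd i (fun w => A w 1 1) z
        - (pd i (fun w => A w 0 1) z * A z 1 0 + A z 0 1 * pd i (fun w => A w 1 0) z) := by
  have dA : ∀ a b : Fin 2, DifferentiableAt ℝ (fun w => A w a b) z :=
    fun a b => (smAt_entry hU hA hz a b).diffAt
  have e : (fun w => (A w).det) = fun w => A w 0 0 * A w 1 1 - A w 0 1 * A w 1 0 :=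
    funext fun w => Matrix.det_fin_two _
  rw [e, pd_sub ((dA 0 0).fun_mul (dA 1 1)) ((dA 0 1).fun_mul (dA 1 0)) i,
    pd_mul (dA 0 0) (dA 1 1) i, pd_mul (dA 0 1) (dA 1 0) i]
  ring

set_option maxHeartbeats 1000000 in
theorem pd_invA (hU : IsOpen U) (hA : SmoothMatOn A U)
    (hdet : ∀ w ∈ U, (A w).det ≠ 0) {z : ℂ} (hz : z ∈ U) (i : Fin 2) : ∀ a b : Fin 2,
    pd i (fun w => (A w)⁻¹ a b) z
      = (!![pd i (fun w => A w 1 1) z, -pd i (fun w => A w 0 1) z;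
            -pd i (fun w => A w 1 0) z, pd i (fun w => A w 0 0) z] a b) * ((A z).det)⁻¹
        - (!![A z 1 1, -A z 0 1; -A z 1 0, A z 0 0] a b)
          * (((A z).det)⁻¹ * (((A z).det)⁻¹ * pd i (fun w => (A w).det) z)) := by
  have dA : ∀ a b : Fin 2, DifferentiableAt ℝ (fun w => A w a b) z :=
    fun a b => (smAt_entry hU hA hz a b).diffAt
  have ddet : DifferentiableAt ℝ (fun w => (A w).det) z := (smAt_det hU hA hz).diffAt
  have hdz : (A z).det ≠ 0 := hdet z hz
  have hloc : ∀ᶠ w in nhds z, (A w).det ≠ 0 := ddet.continuousAt.eventually_ne hdz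
  have dinv : DifferentiableAt ℝ (fun w => ((A w).det)⁻¹) z := ddet.inv hdz
  have hpi := pd_inv ddet hdz hloc i
  simp only [Fin.forall_fin_two]
  refine ⟨⟨?_, ?_⟩, ?_, ?_⟩
  · rw [show (fun w => (A w)⁻¹ 0 0) = fun w => A w 1 1 * ((A w).det)⁻¹ from
      funext fun w => inv00 _, pd_mul (dA 1 1) dinv i, hpi]
    simp; ring
  · rw [show (fun w => (A w)⁻¹ 0 1) = fun w => -A w 0 1 * ((A w).det)⁻¹ from
      funext fun w => inv01 _, pd_mul ((dA 0 1).fun_neg) dinv i, pd_neg i, hpi]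
    simp; ring
  · rw [show (fun w => (A w)⁻¹ 1 0) = fun w => -A w 1 0 * ((A w).det)⁻¹ from
      funext fun w => inv10 _, pd_mul ((dA 1 0).fun_neg) dinv i, pd_neg i, hpi]
    simp; ring
  · rw [show (fun w => (A w)⁻¹ 1 1) = fun w => A w 0 0 * ((A w).det)⁻¹ from
      funext fun w => inv11 _, pd_mul (dA 0 0) dinv i, hpi]
    simp; ring

theorem smAt_Dd (hU : IsOpen U) (hg : IsMetricOn g U) (hA : SmoothMatOn A U) {z : ℂ}
    (hz : z ∈ U) (i m k : Fin 2) : SmAt (fun w => Dd g A i m k w) z := by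
  have e : (fun w => Dd g A i m k w) = fun w => pd i (fun v => A v m k) w
      + (christoffel g m i 0 w * A w 0 k + christoffel g m i 1 w * A w 1 k) := by
    funext w; simp [Dd, Fin.sum_univ_two]
  rw [e]
  exact ((smAt_entry hU hA hz m k).pd i).add
    (((smAt_christoffel hU hg hz m i 0).mul (smAt_entry hU hA hz 0 k)).add
     ((smAt_christoffel hU hg hz m i 1).mul (smAt_entry hU hA hz 1 k)))

theorem pd_Dd (hU : IsOpen U) (hg : IsMetricOn g U) (hA : SmoothMatOn A U) {z : ℂ}
    (hz : z ∈ U) (i i' m k : Fin 2) :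
    pd i (fun w => Dd g A i' m k w) z
      = pd i (fun w => pd i' (fun v => A v m k) w) z
        + (christoffel g m i' 0 z * pd i (fun w => A w 0 k) z
            + A z 0 k * pd i (christoffel g m i' 0) z
          + (christoffel g m i' 1 z * pd i (fun w => A w 1 k) z
            + A z 1 k * pd i (christoffel g m i' 1) z)) := by
  have dA : ∀ a b : Fin 2, DifferentiableAt ℝ (fun w => A w a b) z :=
    fun a b => (smAt_entry hU hA hz a b).diffAt
  have dG : ∀ a b c : Fin 2, DifferentiableAt ℝ (christoffel g a b c) z :=
    fun a b c => (smAt_christoffel hU hg hz a b c).diffAt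
  have e : (fun w => Dd g A i' m k w) = fun w => pd i' (fun v => A v m k) w
      + (christoffel g m i' 0 w * A w 0 k + christoffel g m i' 1 w * A w 1 k) := by
    funext w; simp [Dd, Fin.sum_univ_two]
  rw [e, pd_add ((smAt_entry hU hA hz m k).pd i').diffAt
      (((dG m i' 0).fun_mul (dA 0 k)).fun_add ((dG m i' 1).fun_mul (dA 1 k))) i,
    pd_add ((dG m i' 0).fun_mul (dA 0 k)) ((dG m i' 1).fun_mul (dA 1 k)) i,
    pd_mul (dG m i' 0) (dA 0 k) i, pd_mul (dG m i' 1) (dA 1 k) i]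

end CurvPrep
section RiemH
open Matrix

variable {U : Set ℂ} {g A : ℂ → Matrix (Fin 2) (Fin 2) ℝ}

set_option maxHeartbeats 8000000 in
theorem riem_h (hU : IsOpen U) (hg : IsMetricOn g U) (hA : SmoothMatOn A U)
    (hcodazzi : IsCodazziOn g A U) (hdet : ∀ w ∈ U, (A w).det ≠ 0) {z : ℂ} (hz : z ∈ U) :
    ∀ l k : Fin 2,
    riem (fun w => (A w)ᵀ * g w * A w) l 0 1 k z
      = (A z)⁻¹ l 0 * (riem g 0 0 1 0 z * A z 0 k + riem g 0 0 1 1 z * A z 1 k)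
        + (A z)⁻¹ l 1 * (riem g 1 0 1 0 z * A z 0 k + riem g 1 0 1 1 z * A z 1 k) := by
  have dB : ∀ a b : Fin 2, DifferentiableAt ℝ (fun w => (A w)⁻¹ a b) z :=
    fun a b => (smAt_inv_entry hU hA hdet hz a b).diffAt
  have dDd : ∀ i' m k' : Fin 2, DifferentiableAt ℝ (fun w => Dd g A i' m k' w) z :=
    fun i' m k' => (smAt_Dd hU hg hA hz i' m k').diffAt
  have hdetA' : A z 0 0 * A z 1 1 - A z 0 1 * A z 1 0 ≠ 0 := by
    rw [← Matrix.det_fin_two]; exact hdet z hz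
  have eGt : ∀ l i' k' : Fin 2, (fun w => Gt g A l i' k' w)
      = fun w => (A w)⁻¹ l 0 * Dd g A i' 0 k' w + (A w)⁻¹ l 1 * Dd g A i' 1 k' w := by
    intro l i' k'; funext w; simp [Gt, Fin.sum_univ_two]
  have ePdGt : ∀ i l i' k' : Fin 2, pd i (fun w => Gt g A l i' k' w) z
      = ((A z)⁻¹ l 0 * pd i (fun w => Dd g A i' 0 k' w) z
          + Dd g A i' 0 k' z * pd i (fun w => (A w)⁻¹ l 0) z)
        + ((A z)⁻¹ l 1 * pd i (fun w => Dd g A i' 1 k' w) z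
          + Dd g A i' 1 k' z * pd i (fun w => (A w)⁻¹ l 1) z) := by
    intro i l i' k'
    rw [eGt l i' k', pd_add ((dB l 0).fun_mul (dDd i' 0 k')) ((dB l 1).fun_mul (dDd i' 1 k')) i,
      pd_mul (dB l 0) (dDd i' 0 k') i, pd_mul (dB l 1) (dDd i' 1 k') i]
  simp only [Fin.forall_fin_two]
  refine ⟨⟨?_, ?_⟩, ?_, ?_⟩ <;>
  · simp only [riem, Fin.sum_univ_two]
    rw [pd_congr_on hU hz (fun w hw => christoffel_h hU hg hA hcodazzi hdet hw 1 _ _) 0,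
        pd_congr_on hU hz (fun w hw => christoffel_h hU hg hA hcodazzi hdet hw 0 _ _) 1]
    rw [ePdGt 0 _ 1 _, ePdGt 1 _ 0 _]
    simp only [pd_Dd hU hg hA hz]
    simp only [pd_invA hU hA hdet hz]
    simp only [christoffel_h hU hg hA hcodazzi hdet hz 0 0,
      christoffel_h hU hg hA hcodazzi hdet hz 0 1,
      christoffel_h hU hg hA hcodazzi hdet hz 1 0,
      christoffel_h hU hg hA hcodazzi hdet hz 1 1]
    simp only [Gt, Dd, Fin.sum_univ_two]
    simp only [pd_comm (smAt_entry hU hA hz 0 0) 1 0, pd_comm (smAt_entry hU hA hz 0 1) 1 0,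
      pd_comm (smAt_entry hU hA hz 1 0) 1 0, pd_comm (smAt_entry hU hA hz 1 1) 1 0]
    simp only [pd_det hU hA hz]
    simp only [inv00, inv01, inv10, inv11, Matrix.det_fin_two,
      Matrix.of_apply, Matrix.cons_val', Matrix.cons_val_zero, Matrix.cons_val_one, Matrix.head_cons,
      Matrix.empty_val', Matrix.cons_val_fin_one, Matrix.head_fin_const]
    generalize hD : A z 0 0 * A z 1 1 - A z 0 1 * A z 1 0 = D at *; field_simp; subst hD
    ring

end RiemH
section Antisymm
open Matrix

variable {U : Set ℂ} {g A : ℂ → Matrix (Fin 2) (Fin 2) ℝ}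

set_option maxHeartbeats 4000000 in
theorem riem_antisymm (hU : IsOpen U) (hg : IsMetricOn g U) {z : ℂ} (hz : z ∈ U)
    (a b : Fin 2) :
    (g z 0 a * riem g 0 0 1 b z + g z 1 a * riem g 1 0 1 b z)
      + (g z 0 b * riem g 0 0 1 a z + g z 1 b * riem g 1 0 1 a z) = 0 := by
  have sg : ∀ p q : Fin 2, SmAt (fun w => g w p q) z :=
    fun p q => smAt_entry hU hg.smooth hz p q
  have dg : ∀ p q : Fin 2, DifferentiableAt ℝ (fun w => g w p q) z := fun p q => (sg p q).diffAt
  have dG : ∀ p q r : Fin 2, DifferentiableAt ℝ (christoffel g p q r) z :=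
    fun p q r => (smAt_christoffel hU hg hz p q r).diffAt
  have key : ∀ i' j' : Fin 2, pd i' (fun w => pd j' (fun v => g v a b) w
      - ((christoffel g 0 j' a w * g w 0 b + christoffel g 1 j' a w * g w 1 b)
        + (christoffel g 0 j' b w * g w a 0 + christoffel g 1 j' b w * g w a 1))) z = 0 := by
    intro i' j'
    have h0 : ∀ w ∈ U, pd j' (fun v => g v a b) w
        - ((christoffel g 0 j' a w * g w 0 b + christoffel g 1 j' a w * g w 1 b)
          + (christoffel g 0 j' b w * g w a 0 + christoffel g 1 j' b w * g w a 1)) = 0 :=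
      fun w hw => by rw [compat hU hg hw j' a b]; ring
    calc pd i' _ z = pd i' (fun _ => (0:ℝ)) z := pd_congr_on hU hz h0 i'
      _ = 0 := pd_const i' 0 z
  have E : ∀ i' j' : Fin 2,
      pd i' (fun w => pd j' (fun v => g v a b) w) z
        - ((christoffel g 0 j' a z * pd i' (fun w => g w 0 b) z
            + g z 0 b * pd i' (christoffel g 0 j' a) z
            + (christoffel g 1 j' a z * pd i' (fun w => g w 1 b) z
              + g z 1 b * pd i' (christoffel g 1 j' a) z))
          + (christoffel g 0 j' b z * pd i' (fun w => g w a 0) z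
            + g z a 0 * pd i' (christoffel g 0 j' b) z
            + (christoffel g 1 j' b z * pd i' (fun w => g w a 1) z
              + g z a 1 * pd i' (christoffel g 1 j' b) z))) = 0 := by
    intro i' j'
    have e0 := key i' j'
    rw [pd_sub ((sg a b).pd j').diffAt
        ((((dG 0 j' a).fun_mul (dg 0 b)).fun_add ((dG 1 j' a).fun_mul (dg 1 b))).fun_add
         (((dG 0 j' b).fun_mul (dg a 0)).fun_add ((dG 1 j' b).fun_mul (dg a 1)))) i',
      pd_add (((dG 0 j' a).fun_mul (dg 0 b)).fun_add ((dG 1 j' a).fun_mul (dg 1 b)))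
        (((dG 0 j' b).fun_mul (dg a 0)).fun_add ((dG 1 j' b).fun_mul (dg a 1))) i',
      pd_add ((dG 0 j' a).fun_mul (dg 0 b)) ((dG 1 j' a).fun_mul (dg 1 b)) i',
      pd_add ((dG 0 j' b).fun_mul (dg a 0)) ((dG 1 j' b).fun_mul (dg a 1)) i',
      pd_mul (dG 0 j' a) (dg 0 b) i', pd_mul (dG 1 j' a) (dg 1 b) i',
      pd_mul (dG 0 j' b) (dg a 0) i', pd_mul (dG 1 j' b) (dg a 1) i'] at e0
    linarith [e0]
  simp only [compat hU hg hz] at E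
  have hsymz : g z 1 0 = g z 0 1 := (hg.symm z hz).apply 0 1
  have E01 := E 0 1
  have E10 := E 1 0
  rw [pd_comm (sg a b) 1 0] at E10
  simp only [riem, Fin.sum_univ_two]
  have ha : a = 0 ∨ a = 1 := by omega
  have hb : b = 0 ∨ b = 1 := by omega
  rcases ha with rfl | rfl <;> rcases hb with rfl | rfl <;>
  · simp only [hsymz] at E01 E10 ⊢
    linear_combination E10 - E01

end Antisymm

/-- **Lemma 2.6 (Krasnov–Schlenker)**. Let `g` be a Riemannian metric on a surface and
`A` a smooth Codazzi `(1,1)`-tensor whose determinant vanishes nowhere, and let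
`h = g(A·,A·)`. Then the Levi-Civita connections are related by
`∇^h_X Y = A⁻¹ ∇^g_X (A(Y))`, and the Gaussian curvatures by `K_h = K_g / det A`. -/
theorem stmt_2 (U : Set ℂ) (hU : IsOpen U)
    (g A : ℂ → Matrix (Fin 2) (Fin 2) ℝ)
    (hg : IsMetricOn g U) (hA : SmoothMatOn A U)
    (hcodazzi : IsCodazziOn g A U) (hdet : ∀ z ∈ U, (A z).det ≠ 0)
    (h : ℂ → Matrix (Fin 2) (Fin 2) ℝ) (hh : ∀ z, h z = (A z)ᵀ * g z * A z) :
    (∀ z ∈ U, ∀ X Y : ℂ → Fin 2 → ℝ,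
      (∀ k, DifferentiableAt ℝ (fun w => Y w k) z) →
      (fun k => covVec h X Y k z) =
        (A z)⁻¹.mulVec (fun k => covVec g X (fun w => (A w).mulVec (Y w)) k z)) ∧
    (∀ z ∈ U, gaussK h z = gaussK g z / (A z).det) := by
  have hfun : h = fun w => (A w)ᵀ * g w * A w := funext hh
  subst hfun
  refine ⟨fun z hz X Y hY => covVec_h hU hg hA hcodazzi hdet hz X Y hY, fun z hz => ?_⟩
  have hdz : (A z).det ≠ 0 := hdet z hz
  have hdgz : (g z).det ≠ 0 := gdet_ne hg hz
  have hdetA' : A z 0 0 * A z 1 1 - A z 0 1 * A z 1 0 ≠ 0 := by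
    rw [← Matrix.det_fin_two]; exact hdz
  have hDne : ((A z)ᵀ * g z * A z).det ≠ 0 := by
    rw [Matrix.det_mul, Matrix.det_mul, Matrix.det_transpose]
    exact mul_ne_zero (mul_ne_zero hdz hdgz) hdz
  have contract : ∀ m : Fin 2,
      ((A z)ᵀ * g z * A z) 0 0 * (A z)⁻¹ 0 m + ((A z)ᵀ * g z * A z) 1 0 * (A z)⁻¹ 1 m
        = g z m 0 * A z 0 0 + g z m 1 * A z 1 0 := by
    rw [Fin.forall_fin_two]
    constructor <;>
    · simp only [Matrix.mul_apply, Matrix.transpose_apply, Fin.sum_univ_two,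
        inv00, inv01, inv10, inv11, Matrix.det_fin_two]
      generalize hD : A z 0 0 * A z 1 1 - A z 0 1 * A z 1 0 = D at *; field_simp; subst hD
      ring
  have AS := riem_antisymm hU hg hz
  simp only [gaussK, Fin.sum_univ_two]
  rw [riem_h hU hg hA hcodazzi hdet hz 0 1, riem_h hU hg hA hcodazzi hdet hz 1 1]
  rw [div_div, div_eq_div_iff hDne (mul_ne_zero hdgz hdz)]
  have hDh : ((A z)ᵀ * g z * A z).det = (g z).det * ((A z).det * (A z).det) := by
    rw [Matrix.det_mul, Matrix.det_mul, Matrix.det_transpose]; ring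
  rw [hDh]
  have hnum : ((A z)ᵀ * g z * A z) 0 0
        * ((A z)⁻¹ 0 0 * (riem g 0 0 1 0 z * A z 0 1 + riem g 0 0 1 1 z * A z 1 1)
          + (A z)⁻¹ 0 1 * (riem g 1 0 1 0 z * A z 0 1 + riem g 1 0 1 1 z * A z 1 1))
      + ((A z)ᵀ * g z * A z) 1 0
        * ((A z)⁻¹ 1 0 * (riem g 0 0 1 0 z * A z 0 1 + riem g 0 0 1 1 z * A z 1 1)
          + (A z)⁻¹ 1 1 * (riem g 1 0 1 0 z * A z 0 1 + riem g 1 0 1 1 z * A z 1 1))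
      = (A z).det * (g z 0 0 * riem g 0 0 1 1 z + g z 1 0 * riem g 1 0 1 1 z) := by
    have hd2 : (A z).det = A z 0 0 * A z 1 1 - A z 0 1 * A z 1 0 := Matrix.det_fin_two _
    rw [hd2]
    linear_combination
      (riem g 0 0 1 0 z * A z 0 1 + riem g 0 0 1 1 z * A z 1 1) * contract 0
      + (riem g 1 0 1 0 z * A z 0 1 + riem g 1 0 1 1 z * A z 1 1) * contract 1
      + (A z 0 0 * A z 0 1 / 2) * AS 0 0 + (A z 1 0 * A z 1 1 / 2) * AS 1 1
      + (A z 1 0 * A z 0 1) * AS 0 1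
  linear_combination ((g z).det * (A z).det) * hnum

end
end

section
/- Let U ⊂ 𝕊² ⊂ ℝ³ be an open subset of the unit sphere and let u : U → ℝ be smooth. Define σ : U → ℝ³ by σ(x) = grad^{𝕊²}u(x) + u(x)·x. Then for every x ∈ U and every v ∈ T_x𝕊², the ambient derivative satisfies D_v σ = ∇^{𝕊²}_v grad^{𝕊²}u + u v = b(v), where b = ∇^{𝕊²}_• grad^{𝕊²}u + u𝟙. Consequently, if b is positive definite on U, then σ is an immersion whose unit normal at x is x itself (so its Gauss map is the inclusion U ↪ 𝕊²), whose first fundamental form is g_{𝕊²}(b·,b·), and whose shape operator is b^{-1}. -/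
open scoped RealInnerProductSpace

noncomputable section

local notation "E3" => EuclideanSpace ℝ (Fin 3)

/-- **Step 1 of the proof of Proposition 4.2.** Let `U` be an open subset of the unit sphere
`𝕊² ⊂ ℝ³` and `u` a smooth function near `U`.  Define `σ(x) = grad^{𝕊²}u(x) + u(x)·x`, where
`grad^{𝕊²}u(x)` is the tangential part of the ambient gradient.  Then for every `x ∈ U` and
tangent `v` one has `D_v σ = ∇^{𝕊²}_v grad^{𝕊²}u + u v = b(v)`, where
`b = ∇^{𝕊²}_• grad^{𝕊²}u + u 𝟙` (the tangential projection of the ambient derivative).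
Consequently, if `b` is positive definite on `U`, then `σ` is an immersion whose unit normal
at `x` is `x` itself (its Gauss map is the inclusion `U ↪ 𝕊²`), whose first fundamental form
is `g_{𝕊²}(b·,b·)`, and whose shape operator is `b⁻¹`. -/
theorem stmt_18
    (V : Set E3) (hV : IsOpen V)
    (U : Set E3) (hU : U = V ∩ Metric.sphere (0 : E3) 1)
    (u : E3 → ℝ) (hu : ContDiffOn ℝ (⊤ : ℕ∞) u V)
    (gradS : E3 → E3)
    (hgradS : ∀ x, gradS x = gradient u x - ⟪gradient u x, x⟫ • x)
    (σ : E3 → E3) (hσ : ∀ x, σ x = gradS x + u x • x)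
    (b : E3 → E3 → E3)
    (hb : ∀ x v, b x v =
      (fderiv ℝ gradS x v - ⟪fderiv ℝ gradS x v, x⟫ • x) + u x • v) :
    (∀ x ∈ U, ∀ v : E3, ⟪v, x⟫ = 0 → fderiv ℝ σ x v = b x v) ∧
    ((∀ x ∈ U, ∀ v : E3, ⟪v, x⟫ = 0 → v ≠ 0 → 0 < ⟪b x v, v⟫) →
      (∀ x ∈ U, ∀ v : E3, ⟪v, x⟫ = 0 → fderiv ℝ σ x v = 0 → v = 0) ∧
      (∀ x ∈ U, ‖x‖ = 1 ∧ ∀ v : E3, ⟪v, x⟫ = 0 → ⟪fderiv ℝ σ x v, x⟫ = 0) ∧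
      (∀ x ∈ U, ∀ v w : E3, ⟪v, x⟫ = 0 → ⟪w, x⟫ = 0 →
        ⟪fderiv ℝ σ x v, fderiv ℝ σ x w⟫ = ⟪b x v, b x w⟫) ∧
      (∀ x ∈ U, ∀ v w : E3, ⟪v, x⟫ = 0 → ⟪w, x⟫ = 0 → b x w = v →
        fderiv ℝ σ x w = v)) := by
  -- basic facts about points of U
  have hnorm : ∀ x ∈ U, ‖x‖ = 1 := by
    intro x hx
    rw [hU] at hx
    simpa using hx.2
  have hxx : ∀ x ∈ U, ⟪x, x⟫ = (1 : ℝ) := by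
    intro x hx
    rw [real_inner_self_eq_norm_sq, hnorm x hx]
    norm_num
  -- the key computation
  have key : ∀ x ∈ U, ∀ v : E3, ⟪v, x⟫ = 0 → fderiv ℝ σ x v = b x v := by
    intro x hx v hv
    have hxV : x ∈ V := by rw [hU] at hx; exact hx.1
    have hx1 : ⟪x, x⟫ = (1 : ℝ) := hxx x hx
    have hvx : ⟪x, v⟫ = 0 := by rw [real_inner_comm]; exact hv
    have hmem : V ∈ nhds x := hV.mem_nhds hxV
    have hux : ContDiffAt ℝ (⊤ : ℕ∞) u x := hu.contDiffAt hmem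
    have hud : DifferentiableAt ℝ u x := hux.differentiableAt (by simp)
    -- gradient is smooth
    have hgc : ContDiffAt ℝ (⊤ : ℕ∞) (gradient u) x := by
      have h1 : ContDiffAt ℝ (⊤ : ℕ∞) (fderiv ℝ u) x :=
        hux.fderiv_right (m := (⊤ : ℕ∞)) (by exact_mod_cast le_top)
      exact ((InnerProductSpace.toDual ℝ E3).symm.toContinuousLinearEquiv.contDiff.contDiffAt).comp
        x h1
    have hgd : DifferentiableAt ℝ (gradient u) x := hgc.differentiableAt (by simp)
    set g : E3 → E3 := gradient u with hg
    set Dg : E3 →L[ℝ] E3 := fderiv ℝ g x with hDgdef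
    have hDg : HasFDerivAt g Dg x := hgd.hasFDerivAt
    have hgv : ⟪g x, v⟫ = fderiv ℝ u x v := InnerProductSpace.toDual_symm_apply
    -- derivative of y ↦ ⟪g y, y⟫
    have hDgi : HasFDerivAt (fun y => ⟪g y, y⟫)
        ((fderivInnerCLM ℝ (g x, x)).comp (Dg.prod (ContinuousLinearMap.id ℝ E3))) x :=
      hDg.inner ℝ (hasFDerivAt_id x)
    -- derivative of gradS
    have hfun : gradS = fun y => g y - ⟪g y, y⟫ • y := funext hgradS
    have hS : HasFDerivAt gradS
        (Dg - (⟪g x, x⟫ • ContinuousLinearMap.id ℝ E3 +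
          ((fderivInnerCLM ℝ (g x, x)).comp
            (Dg.prod (ContinuousLinearMap.id ℝ E3))).smulRight x)) x := by
      rw [hfun]
      exact hDg.sub (hDgi.smul (hasFDerivAt_id x))
    -- derivative of σ
    have hσfun : σ = fun y => gradS y + u y • y := funext hσ
    have hσd : HasFDerivAt σ
        ((Dg - (⟪g x, x⟫ • ContinuousLinearMap.id ℝ E3 +
          ((fderivInnerCLM ℝ (g x, x)).comp
            (Dg.prod (ContinuousLinearMap.id ℝ E3))).smulRight x)) +
          (u x • ContinuousLinearMap.id ℝ E3 + (fderiv ℝ u x).smulRight x)) x := by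
      rw [hσfun]
      exact hS.add (hud.hasFDerivAt.smul (hasFDerivAt_id x))
    have hSf := hS.fderiv
    have hσf := hσd.fderiv
    -- evaluate
    have hSv : fderiv ℝ gradS x v =
        Dg v - (⟪g x, x⟫ • v + (⟪g x, v⟫ + ⟪Dg v, x⟫) • x) := by
      rw [hSf]
      simp [fderivInnerCLM_apply]
    have hinner : ⟪fderiv ℝ gradS x v, x⟫ = -(fderiv ℝ u x v) := by
      rw [hSv, ← hgv]
      simp only [inner_sub_left, inner_add_left, real_inner_smul_left, hx1, hv, hvx]
      ring
    rw [hb, hσf, hinner, hSv]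
    simp [fderivInnerCLM_apply]
    module
  refine ⟨key, fun hpos => ⟨?_, ?_, ?_, ?_⟩⟩
  · intro x hx v hv h0
    by_contra hne
    have h1 := hpos x hx v hv hne
    rw [key x hx v hv] at h0
    rw [h0] at h1
    simp at h1
  · intro x hx
    refine ⟨hnorm x hx, fun v hv => ?_⟩
    rw [key x hx v hv, hb]
    simp only [inner_add_left, inner_sub_left, real_inner_smul_left, hxx x hx, hv]
    ring
  · intro x hx v w hv hw
    rw [key x hx v hv, key x hx w hw]
  · intro x hx v w hv hw hbw
    rw [key x hx w hw, hbw]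

end
end
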